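/- Let V ⊆ ℝ^d be a subspace with the Diophantine property, with orthonormal basis {v_1,…,v_r}. Suppose 0 < β < 1 and k ∈ ℕ satisfy d/2^k < β/2. Then there exists a constant K (depending on V and k) such that for every ψ ∈ H^β(𝕋^d) there exist θ_1,…,θ_r ∈ H^{β/2}(𝕋^d) with zero mean ((θ_j)̂_0 = 0), ‖θ_j‖_{H^{β/2}} ≤ K‖ψ‖_{H^β} for each j, and ψ = ψ̂_0 + Σ_{j=1}^r |∂_{v_j}|^{1/2^k} θ_j. -/

import Mathlib

open MeasureTheory
noncomputable section

/-- `ℝ^d`, the universal cover of the torus `𝕋^d = ℝ^d/ℤ^d`. -/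
abbrev Ed (d : ℕ) := Fin d → ℝ

/-- The integer vector `n` viewed as a point of `ℝ^d`. -/
def intVec {d : ℕ} (n : Fin d → ℤ) : Ed d := fun i => (n i : ℝ)

/-- The Euclidean norm on `ℝ^d`. -/
def eucNorm {d : ℕ} (x : Ed d) : ℝ := Real.sqrt (∑ i, x i ^ 2)

/-- The standard fundamental domain `[0,1)^d` of the torus `𝕋^d = ℝ^d/ℤ^d`. -/
def unitCube (d : ℕ) : Set (Ed d) := {x | ∀ i, 0 ≤ x i ∧ x i < 1}

/-- A `ℤ^d`-periodic function on `ℝ^d`, i.e. a function on the torus `𝕋^d`. -/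
def IsPeriodicC {d : ℕ} (f : Ed d → ℂ) : Prop := ∀ x n, f (x + intVec n) = f x

/-- The `L²(𝕋^d)` pairing `⟨ω, ψ⟩ = ∫ ω ψ̄` (with respect to Lebesgue measure,
computed on the fundamental domain). -/
def pairingC {d : ℕ} (ω ψ : Ed d → ℂ) : ℂ :=
  ∫ x in unitCube d, ω x * (starRingEnd ℂ) (ψ x)

/-- The Fourier coefficient `ω̂_n = ∫_{𝕋^d} ω(x) e^{-2πi n·x} dx`. -/
def fourierCoeffT {d : ℕ} (ω : Ed d → ℂ) (n : Fin d → ℤ) : ℂ :=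
  ∫ x in unitCube d,
    ω x * Complex.exp (-(2 * Real.pi * Complex.I) * ∑ i, (n i : ℂ) * (x i : ℂ))

/-- The square of the fractional Sobolev norm
`‖ω‖_{H^β}² = Σ_n (1+‖n‖²)^β |ω̂_n|²`. -/
def sobolevNormSq {d : ℕ} (β : ℝ) (ω : Ed d → ℂ) : ℝ :=
  ∑' n : Fin d → ℤ, (1 + eucNorm (intVec n) ^ 2) ^ β * ‖fourierCoeffT ω n‖ ^ 2

/-- `ω` belongs to the fractional Sobolev space `H^β(𝕋^d)`:
it is `ℤ^d`-periodic, in `L²`, and `Σ_n (1+‖n‖²)^β |ω̂_n|² < ∞`. -/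
def MemHbeta {d : ℕ} (β : ℝ) (ω : Ed d → ℂ) : Prop :=
  IsPeriodicC ω ∧ MemLp ω 2 (volume.restrict (unitCube d)) ∧
    Summable (fun n : Fin d → ℤ => (1 + eucNorm (intVec n) ^ 2) ^ β * ‖fourierCoeffT ω n‖ ^ 2)

/-- The directional derivative `∂_v ψ`. -/
def dirDeriv {d : ℕ} (v : Ed d) (ψ : Ed d → ℂ) : Ed d → ℂ := fun x => fderiv ℝ ψ x v

/-- Iterated directional derivatives along a list of directions (the head of the list
being the outermost derivative). -/
def dirDerivList {d : ℕ} (l : List (Ed d)) (ψ : Ed d → ℂ) : Ed d → ℂ :=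
  l.foldr dirDeriv ψ

/-- The list of directions encoding the multi-index derivative
`D^m_E = ∂_{e 0}^{m 0} ⋯ ∂_{e (s-1)}^{m (s-1)}`. -/
def multiList {d s : ℕ} (e : Fin s → Ed d) (m : Fin s → ℕ) : List (Ed d) :=
  (List.finRange s).flatMap (fun i => List.replicate (m i) (e i))

/-- The multi-index directional derivative `D^m_E ψ = ∂_{e 0}^{m 0} ⋯ ∂_{e (s-1)}^{m (s-1)} ψ`. -/
def multiDeriv {d s : ℕ} (e : Fin s → Ed d) (m : Fin s → ℕ) (ψ : Ed d → ℂ) : Ed d → ℂ :=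
  dirDerivList (multiList e m) ψ

/-- A `C^∞` test function on the torus `𝕋^d`. -/
def IsTestFun {d : ℕ} (ψ : Ed d → ℂ) : Prop :=
  ContDiff ℝ (⊤ : ℕ∞) ψ ∧ IsPeriodicC ψ

/-- The distributional derivative of `ω` along the list of directions `l` is (given by) an
`L²(𝕋^d)` function: there is a periodic `g ∈ L²` with
`⟨g, ψ⟩ = (-1)^{|l|} ⟨ω, D_l ψ⟩` for every test function `ψ`. -/
def HasL2DerivAlong {d : ℕ} (ω : Ed d → ℂ) (l : List (Ed d)) : Prop :=
  ∃ g : Ed d → ℂ, IsPeriodicC g ∧ MemLp g 2 (volume.restrict (unitCube d)) ∧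
    ∀ ψ : Ed d → ℂ, IsTestFun ψ →
      pairingC g ψ = (-1 : ℂ) ^ l.length * pairingC ω (dirDerivList l ψ)

/-- A subspace `V ⊆ ℝ^d` has the Diophantine property. -/
def DiophantineSubspace {d : ℕ} (V : Submodule ℝ (Ed d)) : Prop :=
  ∃ K : ℝ, 0 < K ∧ ∀ n : Fin d → ℤ, n ≠ 0 →
    ∀ (r : ℕ) (v : Fin r → Ed d),
      (∀ j, v j ∈ V) →
      (∀ j k, dotProduct (v j) (v k) = if j = k then 1 else 0) →
      Submodule.span ℝ (Set.range v) = V →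
      K * eucNorm (intVec n) ^ (-(d : ℝ)) ≤ ∑ j, |dotProduct (intVec n) (v j)|

end
open MeasureTheory Complex

noncomputable section
namespace S13

variable {d : ℕ}

/-- The character `x ↦ e^{2πi n·x}`. -/
def charF {d : ℕ} (n : Fin d → ℤ) : Ed d → ℂ := fun x =>
  Complex.exp ((2 * Real.pi * Complex.I) * ∑ i, (n i : ℂ) * (x i : ℂ))

lemma unitCube_eq (d : ℕ) :
    unitCube d = Set.pi Set.univ (fun _ : Fin d => Set.Ico (0:ℝ) 1) := by
  ext x; simp [unitCube, Set.mem_pi, Set.mem_Ico]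

lemma measurableSet_unitCube (d : ℕ) : MeasurableSet (unitCube d) := by
  rw [unitCube_eq]; exact MeasurableSet.univ_pi (fun i => measurableSet_Ico)

lemma volume_unitCube (d : ℕ) : volume (unitCube d) = 1 := by
  rw [unitCube_eq, volume_pi_pi]
  simp [Real.volume_Ico]

/-- The measure on the fundamental domain. -/
abbrev μT (d : ℕ) : Measure (Ed d) := volume.restrict (unitCube d)

instance (d : ℕ) : IsFiniteMeasure (μT d) := by
  constructor
  rw [Measure.restrict_apply_univ, volume_unitCube]
  exact ENNReal.one_lt_top

lemma integral_char_one (m : ℤ) :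
    (∫ t in Set.Ico (0:ℝ) 1, Complex.exp ((2 * Real.pi * Complex.I) * ((m : ℂ) * (t : ℂ))))
      = if m = 0 then 1 else 0 := by
  rw [MeasureTheory.setIntegral_congr_set MeasureTheory.Ico_ae_eq_Ioc,
    ← intervalIntegral.integral_of_le (by norm_num : (0:ℝ) ≤ 1)]
  by_cases hm : m = 0
  · simp [hm]
  · have hc : (2 * Real.pi * Complex.I) * (m : ℂ) ≠ 0 := by
      simp [Real.pi_ne_zero, Complex.I_ne_zero, hm]
    have := integral_exp_mul_complex (a := 0) (b := 1) hc
    simp only [mul_assoc] at this ⊢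
    rw [this]
    have h1 : cexp (2 * ((Real.pi:ℂ) * (I * ((m:ℂ) * ((1:ℝ):ℂ))))) = 1 := by
      rw [show (2 * ((Real.pi:ℂ) * (Complex.I * ((m:ℂ) * ((1:ℝ):ℂ))))) =
          (m : ℂ) * (2 * Real.pi * Complex.I) by push_cast; ring]
      exact Complex.exp_int_mul_two_pi_mul_I m
    rw [h1]
    simp [hm]

open scoped ComplexInnerProductSpace

lemma charF_prod (n : Fin d → ℤ) (x : Ed d) :
    charF n x = ∏ i, Complex.exp ((2 * Real.pi * Complex.I) * ((n i : ℂ) * (x i : ℂ))) := by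
  rw [charF, Finset.mul_sum, Complex.exp_sum]

lemma integral_char (n : Fin d → ℤ) :
    (∫ x in unitCube d, charF n x) = if n = 0 then 1 else 0 := by
  simp_rw [charF_prod]
  rw [← MeasureTheory.integral_indicator (measurableSet_unitCube d)]
  have hind : (unitCube d).indicator
        (fun x => ∏ i, Complex.exp ((2 * Real.pi * Complex.I) * ((n i : ℂ) * (x i : ℂ))))
      = fun x => ∏ i, (Set.Ico (0:ℝ) 1).indicator
          (fun t => Complex.exp ((2 * Real.pi * Complex.I) * ((n i : ℂ) * (t : ℂ)))) (x i) := by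
    funext x
    by_cases hx : x ∈ unitCube d
    · rw [Set.indicator_of_mem hx]
      refine Finset.prod_congr rfl fun i _ => ?_
      rw [Set.indicator_of_mem]
      exact Set.mem_Ico.2 (hx i)
    · rw [Set.indicator_of_notMem hx]
      obtain ⟨i, hi⟩ : ∃ i, ¬ (0 ≤ x i ∧ x i < 1) := by
        by_contra h
        push_neg at h
        exact hx fun i => h i
      refine (Finset.prod_eq_zero (Finset.mem_univ i) ?_).symm
      rw [Set.indicator_of_notMem]
      simpa [Set.mem_Ico] using hi
  rw [hind, MeasureTheory.integral_fintype_prod_volume_eq_prod (ι := Fin d)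
    (f := fun i => (Set.Ico (0:ℝ) 1).indicator
      (fun t => Complex.exp ((2 * Real.pi * Complex.I) * ((n i : ℂ) * (t : ℂ)))))]
  simp_rw [MeasureTheory.integral_indicator measurableSet_Ico, integral_char_one]
  by_cases h : n = 0
  · simp [h]
  · obtain ⟨i, hi⟩ : ∃ i, n i ≠ 0 := by
      by_contra hcon
      push_neg at hcon
      exact h (funext hcon)
    rw [if_neg h]
    exact Finset.prod_eq_zero (Finset.mem_univ i) (if_neg hi)

lemma conj_charF (n : Fin d → ℤ) (x : Ed d) :
    (starRingEnd ℂ) (charF n x)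
      = Complex.exp (-(2 * Real.pi * Complex.I) * ∑ i, (n i : ℂ) * (x i : ℂ)) := by
  rw [charF, ← Complex.exp_conj]
  congr 1
  rw [map_mul, map_sum]
  simp only [map_mul, Complex.conj_I, map_ofNat, Complex.conj_ofReal, map_intCast]
  ring

lemma conj_mul_charF (n m : Fin d → ℤ) (x : Ed d) :
    (starRingEnd ℂ) (charF n x) * charF m x = charF (m - n) x := by
  rw [conj_charF, charF, charF, ← Complex.exp_add]
  congr 1
  have : ∑ i, ((m - n) i : ℂ) * (x i : ℂ)
      = ∑ i, (m i : ℂ) * (x i : ℂ) - ∑ i, (n i : ℂ) * (x i : ℂ) := by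
    rw [← Finset.sum_sub_distrib]
    refine Finset.sum_congr rfl fun i _ => ?_
    push_cast [Pi.sub_apply]
    ring
  rw [this]
  ring

lemma charF_norm (n : Fin d → ℤ) (x : Ed d) : ‖charF n x‖ = 1 := by
  rw [charF]
  have : (2 * Real.pi * Complex.I) * ∑ i, (n i : ℂ) * (x i : ℂ)
      = ((2 * Real.pi * ∑ i, (n i : ℝ) * x i : ℝ) : ℂ) * Complex.I := by
    push_cast
    ring
  rw [this, Complex.norm_exp_ofReal_mul_I]

lemma continuous_charF (n : Fin d → ℤ) : Continuous (charF n) := by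
  apply Complex.continuous_exp.comp
  fun_prop

lemma memℒp_charF (n : Fin d → ℤ) : MemLp (charF n) 2 (μT d) :=
  MemLp.of_bound (continuous_charF n).aestronglyMeasurable 1
    (Filter.Eventually.of_forall fun x => le_of_eq (charF_norm n x))

/-- The character as an element of `L²`. -/
def eL (n : Fin d → ℤ) : Lp ℂ 2 (μT d) := (memℒp_charF n).toLp (charF n)

lemma inner_eL (n m : Fin d → ℤ) : ⟪eL (d := d) n, eL m⟫ = if n = m then 1 else 0 := by
  rw [MeasureTheory.L2.inner_def]
  have h1 : ∀ᵐ a ∂(μT d), ⟪(eL (d := d) n) a, (eL (d := d) m) a⟫ = charF (m - n) a := by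
    filter_upwards [(memℒp_charF (d := d) n).coeFn_toLp, (memℒp_charF (d := d) m).coeFn_toLp]
      with a ha hb
    rw [RCLike.inner_apply, eL, eL] at *
    rw [ha, hb, mul_comm, conj_mul_charF]
  rw [MeasureTheory.integral_congr_ae h1]
  rw [show (∫ a, charF (m - n) a ∂(μT d)) = ∫ x in unitCube d, charF (m-n) x from rfl,
    integral_char]
  by_cases h : n = m
  · simp [h]
  · rw [if_neg h, if_neg]
    intro hmn
    exact h (sub_eq_zero.1 hmn).symm
lemma orthonormal_eL : Orthonormal ℂ (eL (d := d)) := orthonormal_iff_ite.2 inner_eL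

lemma exists_periodic_of_coeffs (c : (Fin d → ℤ) → ℂ)
    (hc : Summable fun n => ‖c n‖ ^ 2) :
    ∃ θ : Ed d → ℂ, IsPeriodicC θ ∧ MemLp θ 2 (μT d) ∧ ∀ n, fourierCoeffT θ n = c n := by
  have hON : Orthonormal ℂ (eL (d := d)) := orthonormal_eL
  have hsum : Summable (fun n => c n • eL (d := d) n) := by
    have h := (hON.orthogonalFamily.summable_iff_norm_sq_summable c).2 (by simpa using hc)
    simpa [LinearIsometry.toSpanSingleton_apply] using h
  set Θ : Lp ℂ 2 (μT d) := ∑' n, c n • eL (d := d) n with hΘ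
  have hinner : ∀ n, ⟪eL (d := d) n, Θ⟫ = c n := by
    intro n
    rw [hΘ]
    rw [show (inner ℂ (eL (d := d) n) (∑' m, c m • eL (d := d) m) : ℂ)
        = (innerSL ℂ (eL (d := d) n)) (∑' m, c m • eL (d := d) m) from rfl]
    rw [ContinuousLinearMap.map_tsum (innerSL ℂ (eL (d := d) n)) hsum]
    have : ∀ m, (innerSL ℂ (eL (d := d) n)) (c m • eL (d := d) m)
        = c m * (if n = m then 1 else 0) := by
      intro m
      rw [innerSL_apply_apply, inner_smul_right, inner_eL]
    simp_rw [this]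
    rw [tsum_eq_single n (fun m hm => by rw [if_neg (fun h => hm h.symm), mul_zero])]
    rw [if_pos rfl, mul_one]
  have hfc : ∀ n, fourierCoeffT (⇑Θ) n = c n := by
    intro n
    rw [← hinner n, MeasureTheory.L2.inner_def, fourierCoeffT]
    refine MeasureTheory.integral_congr_ae ?_
    filter_upwards [(memℒp_charF (d := d) n).coeFn_toLp] with a ha
    rw [RCLike.inner_apply, show (eL (d := d) n) a = charF n a from ha, conj_charF, mul_comm]
  have heq : ∀ x ∈ unitCube d, Θ (fun i => Int.fract (x i)) = Θ x := by
    intro x hx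
    have : (fun i => Int.fract (x i)) = x :=
      funext fun i => Int.fract_eq_self.2 (hx i)
    rw [this]
  refine ⟨fun x => Θ (fun i => Int.fract (x i)), ?_, ?_, ?_⟩
  · intro x nn
    have : (fun i => Int.fract ((x + intVec nn) i)) = fun i => Int.fract (x i) :=
      funext fun i => by simp [intVec, Int.fract_add_intCast]
    simp only [this]
  · exact (MeasureTheory.Lp.memLp Θ).ae_eq
      ((MeasureTheory.ae_restrict_mem (measurableSet_unitCube d)).mono
        fun x hx => (heq x hx).symm)
  · intro n
    rw [← hfc n, fourierCoeffT, fourierCoeffT]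
    exact MeasureTheory.setIntegral_congr_fun (measurableSet_unitCube d)
      (fun x hx => by rw [heq x hx])
/-- `x_{j,n} = |n·v_j|^γ`. -/
def xcoef {d r : ℕ} (v : Fin r → Ed d) (γ : ℝ) (j : Fin r) (n : Fin d → ℤ) : ℝ :=
  |dotProduct (intVec n) (v j)| ^ γ

/-- `D_n = Σ_j x_{j,n}²`. -/
def Dcoef {d r : ℕ} (v : Fin r → Ed d) (γ : ℝ) (n : Fin d → ℤ) : ℝ :=
  ∑ j, xcoef v γ j n ^ 2

/-- The weight `1 + ‖n‖²`. -/
def N2 {d : ℕ} (n : Fin d → ℤ) : ℝ := 1 + eucNorm (intVec n) ^ 2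

lemma one_le_N2 {d : ℕ} (n : Fin d → ℤ) : 1 ≤ N2 n := by
  have : 0 ≤ eucNorm (intVec n) ^ 2 := sq_nonneg _
  rw [N2]; linarith

lemma xcoef_nonneg {d r : ℕ} (v : Fin r → Ed d) (γ : ℝ) (j : Fin r) (n : Fin d → ℤ) :
    0 ≤ xcoef v γ j n := Real.rpow_nonneg (abs_nonneg _) _

lemma Dcoef_nonneg {d r : ℕ} (v : Fin r → Ed d) (γ : ℝ) (n : Fin d → ℤ) :
    0 ≤ Dcoef v γ n := Finset.sum_nonneg fun j _ => sq_nonneg _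

lemma sq_xcoef_le_Dcoef {d r : ℕ} (v : Fin r → Ed d) (γ : ℝ) (j : Fin r) (n : Fin d → ℤ) :
    xcoef v γ j n ^ 2 ≤ Dcoef v γ n :=
  Finset.single_le_sum (fun i _ => sq_nonneg (xcoef v γ i n)) (Finset.mem_univ j)

lemma one_le_eucNorm {d : ℕ} (n : Fin d → ℤ) (hn : n ≠ 0) : 1 ≤ eucNorm (intVec n) := by
  obtain ⟨i, hi⟩ : ∃ i, n i ≠ 0 := by
    by_contra h; push_neg at h; exact hn (funext h)
  rw [eucNorm, show (1:ℝ) = Real.sqrt 1 from (Real.sqrt_one).symm]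
  apply Real.sqrt_le_sqrt
  have h1 : (1:ℝ) ≤ |(n i : ℝ)| := by exact_mod_cast Int.one_le_abs hi
  calc (1:ℝ) ≤ intVec n i ^ 2 := by
        rw [intVec]
        nlinarith [_root_.sq_abs ((n i : ℝ))]
    _ ≤ ∑ i, intVec n i ^ 2 := Finset.single_le_sum (f := fun j => intVec n j ^ 2)
        (fun j _ => sq_nonneg _) (Finset.mem_univ i)

lemma key_bound {d r : ℕ} {K₀ : ℝ} (hK₀pos : 0 < K₀) {v : Fin r → Ed d} {γ : ℝ}
    (hγpos : 0 < γ) {n : Fin d → ℤ} (hn : n ≠ 0)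
    (hS : K₀ * eucNorm (intVec n) ^ (-(d : ℝ)) ≤ ∑ j, |dotProduct (intVec n) (v j)|) :
    0 < Dcoef v γ n ∧
      (Dcoef v γ n)⁻¹ ≤ (((r : ℝ) / K₀) ^ γ) ^ 2 * N2 n ^ ((d : ℝ) * γ) := by
  set e := eucNorm (intVec n) with he
  have he1 : 1 ≤ e := one_le_eucNorm n hn
  have he0 : 0 < e := lt_of_lt_of_le one_pos he1
  set S := ∑ j, |dotProduct (intVec n) (v j)| with hSdef
  have hPpos : 0 < K₀ * e ^ (-(d : ℝ)) := mul_pos hK₀pos (Real.rpow_pos_of_pos he0 _)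
  have hSpos : 0 < S := lt_of_lt_of_le hPpos hS
  have hr0 : r ≠ 0 := by
    rintro rfl
    rw [hSdef, Finset.univ_eq_empty, Finset.sum_empty] at hSpos
    exact lt_irrefl 0 hSpos
  have hrpos : 0 < (r : ℝ) := by exact_mod_cast Nat.pos_of_ne_zero hr0
  obtain ⟨j₀, hj₀⟩ : ∃ j₀, S / r ≤ |dotProduct (intVec n) (v j₀)| := by
    by_contra h
    push_neg at h
    have hne : (Finset.univ : Finset (Fin r)).Nonempty :=
      ⟨⟨0, Nat.pos_of_ne_zero hr0⟩, Finset.mem_univ _⟩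
    have := Finset.sum_lt_sum_of_nonempty hne (fun j _ => h j)
    rw [← hSdef, Finset.sum_const, Finset.card_univ, Fintype.card_fin, nsmul_eq_mul] at this
    rw [mul_div_cancel₀ S (ne_of_gt hrpos)] at this
    exact lt_irrefl S this
  set P := K₀ * e ^ (-(d : ℝ)) / r with hPdef
  have hP0 : 0 < P := div_pos hPpos hrpos
  have hPj : P ≤ |dotProduct (intVec n) (v j₀)| := by
    refine le_trans ?_ hj₀
    rw [hPdef]
    gcongr
  have hxj : P ^ γ ≤ xcoef v γ j₀ n := by
    rw [xcoef]
    exact Real.rpow_le_rpow hP0.le hPj hγpos.le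
  have hDlow : (P ^ γ) ^ 2 ≤ Dcoef v γ n := by
    refine le_trans ?_ (sq_xcoef_le_Dcoef v γ j₀ n)
    have h0 : 0 ≤ P ^ γ := Real.rpow_nonneg hP0.le γ
    nlinarith
  have hPγpos : 0 < (P ^ γ) ^ 2 := pow_pos (Real.rpow_pos_of_pos hP0 γ) 2
  have hDpos : 0 < Dcoef v γ n := lt_of_lt_of_le hPγpos hDlow
  refine ⟨hDpos, ?_⟩
  have hinv : (Dcoef v γ n)⁻¹ ≤ ((P ^ γ) ^ 2)⁻¹ := by
    exact inv_anti₀ hPγpos hDlow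
  refine hinv.trans ?_
  have hPinv : P⁻¹ = (r : ℝ) / K₀ * e ^ (d : ℝ) := by
    rw [hPdef, Real.rpow_neg he0.le]
    field_simp
  have h1 : ((P ^ γ) ^ 2)⁻¹ = ((P⁻¹) ^ γ) ^ 2 := by
    rw [Real.inv_rpow hP0.le, inv_pow]
  rw [h1, hPinv, Real.mul_rpow (by positivity) (by positivity)]
  rw [← Real.rpow_natCast ((r / K₀ : ℝ) ^ γ * (e ^ (d:ℝ)) ^ γ) 2,
    Real.mul_rpow (by positivity) (by positivity)]
  rw [Real.rpow_natCast, Real.rpow_natCast]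
  refine mul_le_mul_of_nonneg_left ?_ (by positivity)
  have h2 : ((e ^ (d:ℝ)) ^ γ) ^ (2:ℕ) = (e ^ (2:ℝ)) ^ ((d:ℝ) * γ) := by
    rw [← Real.rpow_natCast ((e ^ (d:ℝ)) ^ γ) 2, ← Real.rpow_mul he0.le,
      ← Real.rpow_mul he0.le, ← Real.rpow_mul he0.le]
    congr 1
    push_cast
    ring
  rw [h2]
  have h3 : e ^ (2:ℝ) ≤ N2 n := by
    rw [Real.rpow_two, N2, ← he]
    linarith [sq_nonneg e]
  exact Real.rpow_le_rpow (by positivity) h3 (by positivity)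
/-- The Fourier coefficients of `θ_j`. -/
def ccoef {d r : ℕ} (v : Fin r → Ed d) (γ : ℝ) (ψ : Ed d → ℂ) (j : Fin r)
    (n : Fin d → ℤ) : ℂ :=
  if n = 0 then 0 else ((xcoef v γ j n / Dcoef v γ n : ℝ) : ℂ) * fourierCoeffT ψ n

lemma cbound {d r : ℕ} {v : Fin r → Ed d} {γ β CC : ℝ} {ψ : Ed d → ℂ} (hCC : 0 ≤ CC)
    (hD : ∀ n : Fin d → ℤ, n ≠ 0 →
      0 < Dcoef v γ n ∧ (Dcoef v γ n)⁻¹ ≤ CC * N2 n ^ (β / 2))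
    (j : Fin r) (n : Fin d → ℤ) :
    N2 n ^ (β / 2) * ‖ccoef v γ ψ j n‖ ^ 2
      ≤ CC * (N2 n ^ β * ‖fourierCoeffT ψ n‖ ^ 2) := by
  have hN2pos : (0:ℝ) < N2 n := lt_of_lt_of_le one_pos (one_le_N2 n)
  by_cases hn : n = 0
  · subst hn
    rw [ccoef, if_pos rfl, norm_zero]
    norm_num
    positivity
  · obtain ⟨hDpos, hDinv⟩ := hD n hn
    have hX0 : (0:ℝ) < N2 n ^ (β / 2) := Real.rpow_pos_of_pos hN2pos _
    have hA0 : (0:ℝ) ≤ ‖fourierCoeffT ψ n‖ ^ 2 := sq_nonneg _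
    have h1 : ‖ccoef v γ ψ j n‖ ^ 2
        = (xcoef v γ j n / Dcoef v γ n) ^ 2 * ‖fourierCoeffT ψ n‖ ^ 2 := by
      rw [ccoef, if_neg hn, norm_mul, mul_pow, Complex.norm_real, Real.norm_eq_abs,
        _root_.abs_of_nonneg (div_nonneg (xcoef_nonneg _ _ _ _) hDpos.le)]
    have h2 : (xcoef v γ j n / Dcoef v γ n) ^ 2 ≤ CC * N2 n ^ (β / 2) := by
      rw [div_pow]
      calc xcoef v γ j n ^ 2 / Dcoef v γ n ^ 2
          ≤ Dcoef v γ n / Dcoef v γ n ^ 2 := by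
            gcongr
            exact sq_xcoef_le_Dcoef v γ j n
        _ = (Dcoef v γ n)⁻¹ := by
            rw [pow_two, div_mul_eq_div_div, div_self hDpos.ne', one_div]
        _ ≤ CC * N2 n ^ (β / 2) := hDinv
    have hNβ : N2 n ^ β = N2 n ^ (β / 2) * N2 n ^ (β / 2) := by
      rw [← Real.rpow_add hN2pos, add_halves]
    rw [h1, hNβ]
    nlinarith [mul_le_mul_of_nonneg_right h2 (mul_nonneg hX0.le hA0)]

end S13
end

noncomputable section

/-- Let `V ⊆ ℝ^d` be a subspace with the Diophantine property, with
orthonormal basis `v_1, …, v_r`. Suppose `0 < β < 1` and `k ∈ ℕ` satisfy `d/2^k < β/2`.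
Then there is a constant `K` such that every `ψ ∈ H^β(𝕋^d)` can be written as
`ψ = ψ̂_0 + Σ_j |∂_{v_j}|^{1/2^k} θ_j` with `θ_j ∈ H^{β/2}(𝕋^d)` of zero mean and
`‖θ_j‖_{H^{β/2}} ≤ K ‖ψ‖_{H^β}`. (The fractional derivative `|∂_v|^γ θ` is the function with
Fourier coefficients `|n·v|^γ θ̂_n`, so the decomposition of `ψ` is stated as the
corresponding identity of Fourier coefficients for all `n ≠ 0`.) -/
theorem statement_13 {d r : ℕ}
    (V : Submodule ℝ (Ed d)) (hdio : DiophantineSubspace V)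
    (v : Fin r → Ed d) (hvmem : ∀ j, v j ∈ V)
    (hvorth : ∀ j k, dotProduct (v j) (v k) = if j = k then 1 else 0)
    (hvspan : Submodule.span ℝ (Set.range v) = V)
    (β : ℝ) (hβ0 : 0 < β) (hβ1 : β < 1)
    (k : ℕ) (hk : (d : ℝ) / 2 ^ k < β / 2) :
    ∃ K : ℝ, ∀ ψ : Ed d → ℂ, MemHbeta β ψ →
      ∃ θ : Fin r → (Ed d → ℂ),
        (∀ j, MemHbeta (β / 2) (θ j) ∧ fourierCoeffT (θ j) 0 = 0 ∧
          Real.sqrt (sobolevNormSq (β / 2) (θ j)) ≤ K * Real.sqrt (sobolevNormSq β ψ)) ∧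
        (∀ n : Fin d → ℤ, n ≠ 0 →
          fourierCoeffT ψ n =
            ∑ j, (|dotProduct (intVec n) (v j)| ^ ((1 : ℝ) / 2 ^ k) : ℝ) *
              fourierCoeffT (θ j) n) := by
  classical
  obtain ⟨K₀, hK₀pos, hdioK⟩ := hdio
  refine ⟨((r : ℝ) / K₀) ^ ((1 : ℝ) / 2 ^ k), ?_⟩
  intro ψ hψ
  obtain ⟨hψper, hψL2, hψsum⟩ := hψ
  set γ : ℝ := (1 : ℝ) / 2 ^ k with hγdef
  have hγpos : 0 < γ := by rw [hγdef]; positivity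
  have hC0 : 0 ≤ ((r : ℝ) / K₀) ^ γ := Real.rpow_nonneg (by positivity) _
  have hkey : ∀ n : Fin d → ℤ, n ≠ 0 → 0 < S13.Dcoef v γ n ∧
      (S13.Dcoef v γ n)⁻¹ ≤ (((r : ℝ) / K₀) ^ γ) ^ 2 * S13.N2 n ^ (β / 2) := by
    intro n hn
    obtain ⟨hDpos, hDle⟩ :=
      S13.key_bound hK₀pos hγpos hn (hdioK n hn r v hvmem hvorth hvspan)
    refine ⟨hDpos, hDle.trans ?_⟩
    refine mul_le_mul_of_nonneg_left ?_ (by positivity)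
    refine Real.rpow_le_rpow_of_exponent_le (S13.one_le_N2 n) ?_
    have hdγ : (d : ℝ) * γ = (d : ℝ) / 2 ^ k := by rw [hγdef]; ring
    rw [hdγ]
    exact hk.le
  have hbound := S13.cbound (CC := (((r : ℝ) / K₀) ^ γ) ^ 2) (ψ := ψ) (by positivity) hkey
  have hψsum' : Summable (fun n : Fin d → ℤ => S13.N2 n ^ β * ‖fourierCoeffT ψ n‖ ^ 2) := by
    simpa [S13.N2] using hψsum
  have hsummaj : Summable (fun n : Fin d → ℤ =>
      (((r : ℝ) / K₀) ^ γ) ^ 2 * (S13.N2 n ^ β * ‖fourierCoeffT ψ n‖ ^ 2)) :=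
    hψsum'.mul_left _
  have hsumw : ∀ j, Summable (fun n : Fin d → ℤ =>
      S13.N2 n ^ (β / 2) * ‖S13.ccoef v γ ψ j n‖ ^ 2) :=
    fun j => Summable.of_nonneg_of_le
      (fun n => mul_nonneg (Real.rpow_nonneg
        (le_trans zero_le_one (S13.one_le_N2 n)) _) (sq_nonneg _))
      (hbound j) hsummaj
  have hN2ge1 : ∀ n : Fin d → ℤ, 1 ≤ S13.N2 n ^ (β / 2) := by
    intro n
    calc (1 : ℝ) = S13.N2 n ^ (0 : ℝ) := (Real.rpow_zero _).symm
      _ ≤ S13.N2 n ^ (β / 2) :=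
        Real.rpow_le_rpow_of_exponent_le (S13.one_le_N2 n) (by linarith)
  have hsumc : ∀ j, Summable (fun n : Fin d → ℤ => ‖S13.ccoef v γ ψ j n‖ ^ 2) :=
    fun j => Summable.of_nonneg_of_le (fun n => sq_nonneg _)
      (fun n => le_mul_of_one_le_left (sq_nonneg _) (hN2ge1 n)) (hsumw j)
  choose θ hθper hθL2 hθcoeff using
    fun j => S13.exists_periodic_of_coeffs (S13.ccoef v γ ψ j) (hsumc j)
  refine ⟨θ, ?_, ?_⟩
  · intro j
    refine ⟨⟨hθper j, hθL2 j, ?_⟩, ?_, ?_⟩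
    · have heqs : (fun n : Fin d → ℤ =>
          (1 + eucNorm (intVec n) ^ 2) ^ (β / 2) * ‖fourierCoeffT (θ j) n‖ ^ 2)
          = fun n => S13.N2 n ^ (β / 2) * ‖S13.ccoef v γ ψ j n‖ ^ 2 := by
        funext n
        rw [hθcoeff j n, S13.N2]
      rw [heqs]
      exact hsumw j
    · rw [hθcoeff j 0, S13.ccoef, if_pos rfl]
    · have h1 : sobolevNormSq (β / 2) (θ j)
          = ∑' n : Fin d → ℤ, S13.N2 n ^ (β / 2) * ‖S13.ccoef v γ ψ j n‖ ^ 2 := by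
        simp only [sobolevNormSq, S13.N2]
        exact tsum_congr fun n => by rw [hθcoeff j n]
      rw [h1]
      have h2 : ∑' n : Fin d → ℤ, S13.N2 n ^ (β / 2) * ‖S13.ccoef v γ ψ j n‖ ^ 2
          ≤ ∑' n : Fin d → ℤ,
            (((r : ℝ) / K₀) ^ γ) ^ 2 * (S13.N2 n ^ β * ‖fourierCoeffT ψ n‖ ^ 2) :=
        Summable.tsum_le_tsum (hbound j) (hsumw j) hsummaj
      refine (Real.sqrt_le_sqrt h2).trans ?_
      rw [tsum_mul_left, Real.sqrt_mul (sq_nonneg _), Real.sqrt_sq hC0]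
      have h3 : sobolevNormSq β ψ
          = ∑' n : Fin d → ℤ, S13.N2 n ^ β * ‖fourierCoeffT ψ n‖ ^ 2 := by
        simp only [sobolevNormSq, S13.N2]
      rw [h3]
  · intro n hn
    obtain ⟨hDpos, _⟩ := hkey n hn
    have hstep : ∀ j : Fin r,
        ((|dotProduct (intVec n) (v j)| ^ γ : ℝ) : ℂ) * fourierCoeffT (θ j) n
        = ((S13.xcoef v γ j n ^ 2 / S13.Dcoef v γ n : ℝ) : ℂ) * fourierCoeffT ψ n := by
      intro j
      rw [hθcoeff j n, S13.ccoef, if_neg hn,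
        show |dotProduct (intVec n) (v j)| ^ γ = S13.xcoef v γ j n from rfl]
      push_cast
      ring
    rw [Finset.sum_congr rfl (fun j _ => hstep j), ← Finset.sum_mul, ← Complex.ofReal_sum,
      ← Finset.sum_div,
      show (∑ j, S13.xcoef v γ j n ^ 2) = S13.Dcoef v γ n from rfl,
      div_self hDpos.ne']
    simp

end
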